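/- Fix an integer N ≥ 2 and a real number q with 0 < q < 1. Let m, n be nonzero integers and s, t ∈ ℂ \ {0} with s^m t^n = q^{-N}. Then for every x ∈ ℂ \ {0} at which all theta factors occurring are nonzero: (i) if mn < 0, then Y_{m,n}(x;s,t) = ∏_{k=1}^{|m|−1} [U(s^{-k}x)/U(s^{k}x)] · ∏_{k'=1}^{|n|−1} [U(t^{k'}x)/U(t^{-k'}x)]; (ii) if mn > 0, then Y_{m,n}(x;s,t) = ∏_{k=1}^{|m|} [U(s^{-k}x)/U(s^{k}x)] · ∏_{k'=1}^{|n|−1} [U(t^{k'}x)/U(t^{-k'}x)], and also Y_{m,n}(x;s,t) = ∏_{k=1}^{|m|−1} [U(s^{-k}x)/U(s^{k}x)] · ∏_{k'=1}^{|n|} [U(t^{k'}x)/U(t^{-k'}x)]. -/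

import Mathlib

/-- Infinite `q`-Pochhammer symbol `(z;p)_∞ = ∏_{j≥0} (1 − z pʲ)`. -/
noncomputable def qPoch (z p : ℂ) : ℂ := ∏' j : ℕ, (1 - z * p ^ j)

/-- Jacobi Θ function `Θ_p(z) = (z;p)_∞ (p z⁻¹;p)_∞ (p;p)_∞`. -/
noncomputable def ThetaF (p z : ℂ) : ℂ := qPoch z p * qPoch (p * z⁻¹) p * qPoch p p

/-- The function
`U(z) = q^{2/N−2} · Θ_{q^{2N}}(q²z²) Θ_{q^{2N}}(q²z⁻²) / (Θ_{q^{2N}}(z²) Θ_{q^{2N}}(z⁻²))`. -/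
noncomputable def Ufun (N : ℕ) (q : ℝ) (z : ℂ) : ℂ :=
  ((q ^ ((2 : ℝ) / N - 2) : ℝ) : ℂ) *
    (ThetaF ((q : ℂ) ^ (2 * N)) ((q : ℂ) ^ 2 * z ^ 2) *
      ThetaF ((q : ℂ) ^ (2 * N)) ((q : ℂ) ^ 2 * z⁻¹ ^ 2)) /
    (ThetaF ((q : ℂ) ^ (2 * N)) (z ^ 2) * ThetaF ((q : ℂ) ^ (2 * N)) (z⁻¹ ^ 2))

/-- All four theta factors occurring in `U(z)` are nonzero. -/
def thetaReg (N : ℕ) (q : ℝ) (z : ℂ) : Prop :=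
  ThetaF ((q : ℂ) ^ (2 * N)) ((q : ℂ) ^ 2 * z ^ 2) ≠ 0 ∧
  ThetaF ((q : ℂ) ^ (2 * N)) ((q : ℂ) ^ 2 * z⁻¹ ^ 2) ≠ 0 ∧
  ThetaF ((q : ℂ) ^ (2 * N)) (z ^ 2) ≠ 0 ∧
  ThetaF ((q : ℂ) ^ (2 * N)) (z⁻¹ ^ 2) ≠ 0

/-- `F_a(x;s) = ∏_{k=0}^{a−1} U(sᵏx)` for `a > 0`, `F₀ = 1`, and
`F_a(x;s) = ∏_{k=1}^{−a} U(s⁻ᵏx)⁻¹` for `a < 0`. -/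
noncomputable def Ffun (N : ℕ) (q : ℝ) (s x : ℂ) (a : ℤ) : ℂ :=
  if 0 < a then ∏ k ∈ Finset.range a.toNat, Ufun N q (s ^ (k : ℕ) * x)
  else ∏ k ∈ Finset.range (-a).toNat, (Ufun N q (s ^ (-(k : ℤ) - 1) * x))⁻¹

/-- The structure function
`Y_{m,n}(x;s,t) = F_n(x;t) F_{−n}(x;t) / (F_m(x;s) F_{−m}(x;s))`. -/
noncomputable def Yfun (N : ℕ) (q : ℝ) (s t x : ℂ) (m n : ℤ) : ℂ :=
  Ffun N q t x n * Ffun N q t x (-n) / (Ffun N q s x m * Ffun N q s x (-m))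

lemma hasProd_zero_of_factor_zero {f : ℕ → ℂ} {i0 : ℕ} (h : f i0 = 0) : HasProd f 0 := by
  apply Filter.Tendsto.congr' _ tendsto_const_nhds
  filter_upwards [Filter.eventually_ge_atTop {i0}] with S hS
  exact (Finset.prod_eq_zero (by simpa using hS) h).symm

lemma multipliable_aux {p : ℂ} (hp : ‖p‖ < 1) (z : ℂ) :
    Multipliable (fun j : ℕ => 1 - z * p ^ j) := by
  by_cases h : ∀ j : ℕ, 1 - z * p ^ j ≠ 0
  · have hb : ∀ᶠ j in Filter.atTop, ‖Complex.log (1 - z * p ^ j)‖ ≤ (3/2) * (‖z‖ * ‖p‖ ^ j) := by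
      have ht : Filter.Tendsto (fun j : ℕ => ‖z‖ * ‖p‖ ^ j) Filter.atTop (nhds 0) := by
        simpa using (tendsto_pow_atTop_nhds_zero_of_lt_one (by positivity)
          hp).const_mul ‖z‖
      filter_upwards [ht.eventually_le_const (by norm_num : (0:ℝ) < 1/2)] with j hj
      have : ‖-(z * p ^ j)‖ ≤ 1/2 := by
        simpa [norm_mul, norm_pow] using hj
      have := Complex.norm_log_one_add_half_le_self this
      simpa [sub_eq_add_neg, norm_mul, norm_pow] using this
    have hsum : Summable (fun j : ℕ => (3/2 : ℝ) * (‖z‖ * ‖p‖ ^ j)) :=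
      ((summable_geometric_of_lt_one (by positivity) hp).mul_left ‖z‖).mul_left _
    have hsum' : Summable fun n => Complex.log (1 - z * p ^ n) :=
      Summable.of_norm_bounded_eventually_nat hsum hb
    exact Complex.multipliable_of_summable_log hsum'
  · push_neg at h
    obtain ⟨j0, hj0⟩ := h
    exact ⟨0, hasProd_zero_of_factor_zero hj0⟩

lemma qPoch_shift {p : ℂ} (hp : ‖p‖ < 1) (z : ℂ) :
    qPoch z p = (1 - z) * qPoch (p * z) p := by
  have h1 : Multipliable (fun n : ℕ => 1 - z * p ^ (n + 1)) := by
    have := multipliable_aux hp (p * z)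
    apply this.congr
    intro n; ring
  have := tprod_eq_zero_mul' (f := fun n : ℕ => 1 - z * p ^ n) h1
  rw [qPoch, this]
  congr 1
  · simp
  · rw [qPoch]
    exact tprod_congr fun n => by ring

lemma qPoch_one_eq_zero (p : ℂ) : qPoch 1 p = 0 := by
  have : HasProd (fun j : ℕ => 1 - (1:ℂ) * p ^ j) 0 :=
    hasProd_zero_of_factor_zero (i0 := 0) (by simp)
  exact this.tprod_eq

lemma ThetaF_quasi {p : ℂ} (hp : ‖p‖ < 1) (hp0 : p ≠ 0) {z : ℂ} (hz : z ≠ 0) :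
    ThetaF p (p * z) = -z⁻¹ * ThetaF p z := by
  by_cases h1 : z = 1
  · subst h1
    simp only [ThetaF, mul_one]
    rw [mul_inv_cancel₀ hp0, qPoch_one_eq_zero]
    ring
  · have hne : (1 : ℂ) - z ≠ 0 := by
      intro h; apply h1; linear_combination -h
    have key : (1 - z) * ThetaF p (p * z) = (1 - z) * (-z⁻¹ * ThetaF p z) := by
      have e1 : p * (p * z)⁻¹ = z⁻¹ := by field_simp
      rw [ThetaF, e1, ThetaF]
      rw [qPoch_shift hp z⁻¹, qPoch_shift hp z]
      field_simp
      ring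
    exact mul_left_cancel₀ hne key

lemma ThetaF_quasi_inv {p : ℂ} (hp : ‖p‖ < 1) (hp0 : p ≠ 0) {w : ℂ} (hw : w ≠ 0) :
    ThetaF p (p⁻¹ * w) = -(p⁻¹ * w) * ThetaF p w := by
  have h := ThetaF_quasi hp hp0 (z := p⁻¹ * w) (by simp [hp0, hw])
  rw [show p * (p⁻¹ * w) = w by field_simp] at h
  rw [h]
  field_simp

lemma div_transform {a b c d K : ℂ} (hK : K ≠ 0) (h1 : a = K * b) (h2 : c = K * d) :
    a / c = b / d := by rw [h1, h2, mul_div_mul_left _ _ hK]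

lemma Ufun_qN (N : ℕ) (hN : 2 ≤ N) (q : ℝ) (hq0 : 0 < q) (hq1 : q < 1)
    {z : ℂ} (hz : z ≠ 0) : Ufun N q ((q : ℂ) ^ N * z) = Ufun N q z := by
  have hq : (q : ℂ) ≠ 0 := by
    simp [Complex.ofReal_ne_zero]; exact ne_of_gt hq0
  set p : ℂ := (q : ℂ) ^ (2 * N) with hpdef
  have hp0 : p ≠ 0 := pow_ne_zero _ hq
  have hp : ‖p‖ < 1 := by
    rw [hpdef, norm_pow, Complex.norm_real, Real.norm_eq_abs, abs_of_pos hq0]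
    exact pow_lt_one₀ (le_of_lt hq0) hq1 (by omega)
  have hcz : (q : ℂ) ^ N * z ≠ 0 := mul_ne_zero (pow_ne_zero _ hq) hz
  have e1 : (q : ℂ) ^ 2 * ((q : ℂ) ^ N * z) ^ 2 = p * ((q : ℂ) ^ 2 * z ^ 2) := by
    rw [hpdef]; ring
  have e2 : (q : ℂ) ^ 2 * (((q : ℂ) ^ N * z)⁻¹) ^ 2 = p⁻¹ * ((q : ℂ) ^ 2 * (z⁻¹) ^ 2) := by
    rw [hpdef]; field_simp; ring
  have e3 : ((q : ℂ) ^ N * z) ^ 2 = p * z ^ 2 := by rw [hpdef]; ring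
  have e4 : (((q : ℂ) ^ N * z)⁻¹) ^ 2 = p⁻¹ * (z⁻¹) ^ 2 := by
    rw [hpdef]; field_simp; ring
  have hw1 : (q : ℂ) ^ 2 * z ^ 2 ≠ 0 := mul_ne_zero (pow_ne_zero _ hq) (pow_ne_zero _ hz)
  have hw2 : (q : ℂ) ^ 2 * (z⁻¹) ^ 2 ≠ 0 := mul_ne_zero (pow_ne_zero _ hq) (pow_ne_zero _ (inv_ne_zero hz))
  have hw3 : z ^ 2 ≠ 0 := pow_ne_zero _ hz
  have hw4 : (z⁻¹) ^ 2 ≠ 0 := pow_ne_zero _ (inv_ne_zero hz)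
  rw [Ufun, Ufun, e1, e2, e3, e4,
    ThetaF_quasi hp hp0 hw1, ThetaF_quasi_inv hp hp0 hw2,
    ThetaF_quasi hp hp0 hw3, ThetaF_quasi_inv hp hp0 hw4]
  have hK : p⁻¹ * (z⁻¹) ^ 4 ≠ 0 := mul_ne_zero (inv_ne_zero hp0) (pow_ne_zero _ (inv_ne_zero hz))
  apply div_transform hK
  · field_simp
    ring
  · field_simp
    rw [hpdef]

lemma Fpair (N : ℕ) (q : ℝ) (u x : ℂ) (a : ℤ) (ha : a ≠ 0) :
    Ffun N q u x a * Ffun N q u x (-a) =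
      (∏ k ∈ Finset.range a.natAbs, Ufun N q (u ^ (k : ℕ) * x)) *
        ∏ k ∈ Finset.range a.natAbs, (Ufun N q (u ^ (-(k : ℤ) - 1) * x))⁻¹ := by
  rcases lt_or_gt_of_ne ha with h | h
  · have h1 : ¬ (0 < a) := by omega
    have h2 : (0 : ℤ) < -a := by omega
    have h3 : (-a).toNat = a.natAbs := by omega
    rw [Ffun, Ffun, if_neg h1, if_pos h2, h3, mul_comm]
  · have h1 : (0 : ℤ) < a := h
    have h2 : ¬ ((0:ℤ) < -a) := by omega
    have h3 : a.toNat = a.natAbs := by omega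
    have h4 : (- -a).toNat = a.natAbs := by omega
    rw [Ffun, Ffun, if_pos h1, if_neg h2, h3, h4]

lemma prodA (N : ℕ) (q : ℝ) (u x : ℂ) (M : ℕ) (hM : 1 ≤ M) :
    ∏ k ∈ Finset.range M, Ufun N q (u ^ (k : ℕ) * x)
      = Ufun N q (u ^ (0:ℤ) * x) * ∏ k ∈ Finset.Icc 1 (M - 1), Ufun N q (u ^ (k : ℤ) * x) := by
  have hins : Finset.range M = insert 0 (Finset.Icc 1 (M - 1)) := by
    ext k; simp [Finset.mem_range, Finset.mem_Icc]; omega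
  rw [hins, Finset.prod_insert (by simp), show u ^ (0:ℤ) * x = u ^ (0:ℕ) * x by norm_num]
  exact congrArg₂ _ rfl (Finset.prod_congr rfl fun k _ => by rw [zpow_natCast])

lemma prodB (N : ℕ) (q : ℝ) (u x : ℂ) (M : ℕ) :
    ∏ k ∈ Finset.range M, (Ufun N q (u ^ (-(k : ℤ) - 1) * x))⁻¹
      = (∏ k ∈ Finset.Icc 1 M, Ufun N q (u ^ (-(k : ℤ)) * x))⁻¹ := by
  rw [← Finset.prod_inv_distrib]
  have hIcc : Finset.Icc 1 M = Finset.Ico 1 (M + 1) := by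
    ext k; simp [Finset.mem_Icc, Finset.mem_Ico]
  rw [hIcc, Finset.prod_Ico_eq_prod_range]
  apply Finset.prod_congr (by norm_num)
  intro k _
  congr 2
  push_cast
  ring

lemma Ycalc1 {Ux As Bs At Bt E : ℂ} (hUx : Ux ≠ 0) (hAs : As ≠ 0) (hBs : Bs ≠ 0)
    (hAt : At ≠ 0) (hBt : Bt ≠ 0) (hE : E ≠ 0) :
    Ux * (At * (Bt * E)⁻¹) / (Ux * (As * (Bs * E)⁻¹)) = Bs / As * (At / Bt) := by
  field_simp

lemma Ycalc2 {Ux As Bs At Bt E : ℂ} (hUx : Ux ≠ 0) (hAs : As ≠ 0) (hBs : Bs ≠ 0)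
    (hAt : At ≠ 0) (hBt : Bt ≠ 0) (hE : E ≠ 0) :
    Ux * (At * (Bt * E)⁻¹) / (Ux * (As * Bs⁻¹)) = Bs / (As * E) * (At / Bt) := by
  field_simp

lemma Ycalc3 {Ux As Bs At Bt E : ℂ} (hUx : Ux ≠ 0) (hAs : As ≠ 0) (hBs : Bs ≠ 0)
    (hAt : At ≠ 0) (hBt : Bt ≠ 0) (hE : E ≠ 0) :
    Ux * (At * Bt⁻¹) / (Ux * (As * (Bs * E)⁻¹)) = Bs / As * (At * E / Bt) := by
  field_simp

/-- On the surface `s^m t^n = q^{−N}`, the structure function `Y_{m,n}` can be rewritten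
as products of ratios of `U`-functions:
(i) if `mn < 0`, with ranges `1 ≤ k ≤ |m|−1` and `1 ≤ k' ≤ |n|−1`;
(ii) if `mn > 0`, with ranges `(1 ≤ k ≤ |m|, 1 ≤ k' ≤ |n|−1)` and also
`(1 ≤ k ≤ |m|−1, 1 ≤ k' ≤ |n|)`. -/
theorem Yfun_product_formulas (N : ℕ) (hN : 2 ≤ N) (q : ℝ) (hq0 : 0 < q) (hq1 : q < 1)
    (m n : ℤ) (hm : m ≠ 0) (hn : n ≠ 0) (s t : ℂ) (hs : s ≠ 0) (ht : t ≠ 0)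
    (hsurf : s ^ m * t ^ n = (q : ℂ) ^ (-(N : ℤ)))
    (x : ℂ) (hx : x ≠ 0)
    (hregs : ∀ k : ℤ, |k| ≤ |m| → thetaReg N q (s ^ k * x))
    (hregt : ∀ k : ℤ, |k| ≤ |n| → thetaReg N q (t ^ k * x)) :
    (m * n < 0 →
      Yfun N q s t x m n
        = (∏ k ∈ Finset.Icc 1 (m.natAbs - 1),
            Ufun N q (s ^ (-(k : ℤ)) * x) / Ufun N q (s ^ (k : ℤ) * x))
          * ∏ k ∈ Finset.Icc 1 (n.natAbs - 1),
              Ufun N q (t ^ (k : ℤ) * x) / Ufun N q (t ^ (-(k : ℤ)) * x)) ∧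
    (0 < m * n →
      (Yfun N q s t x m n
        = (∏ k ∈ Finset.Icc 1 m.natAbs,
            Ufun N q (s ^ (-(k : ℤ)) * x) / Ufun N q (s ^ (k : ℤ) * x))
          * ∏ k ∈ Finset.Icc 1 (n.natAbs - 1),
              Ufun N q (t ^ (k : ℤ) * x) / Ufun N q (t ^ (-(k : ℤ)) * x)) ∧
      Yfun N q s t x m n
        = (∏ k ∈ Finset.Icc 1 (m.natAbs - 1),
            Ufun N q (s ^ (-(k : ℤ)) * x) / Ufun N q (s ^ (k : ℤ) * x))
          * ∏ k ∈ Finset.Icc 1 n.natAbs,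
              Ufun N q (t ^ (k : ℤ) * x) / Ufun N q (t ^ (-(k : ℤ)) * x)) := by
  have hqc : (q : ℂ) ≠ 0 := Complex.ofReal_ne_zero.mpr (ne_of_gt hq0)
  set c : ℂ := (q : ℂ) ^ N with hc
  have hc0 : c ≠ 0 := pow_ne_zero _ hqc
  have Uc : ∀ w : ℂ, w ≠ 0 → Ufun N q (c * w) = Ufun N q w := fun w hw =>
    Ufun_qN N hN q hq0 hq1 hw
  have Uci : ∀ w : ℂ, w ≠ 0 → Ufun N q (c⁻¹ * w) = Ufun N q w := by
    intro w hw
    have h := Ufun_qN N hN q hq0 hq1 (z := c⁻¹ * w)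
      (mul_ne_zero (inv_ne_zero hc0) hw)
    rw [← hc, show c * (c⁻¹ * w) = w by field_simp] at h
    exact h.symm
  have htn : t ^ n ≠ 0 := zpow_ne_zero _ ht
  have hsm : s ^ m = c⁻¹ * (t ^ n)⁻¹ := by
    have hq' : (q : ℂ) ^ (-(N : ℤ)) = c⁻¹ := by
      rw [zpow_neg, zpow_natCast, hc]
    rw [hq'] at hsurf
    field_simp at hsurf ⊢
    linear_combination hsurf
  have hsminv : s ^ (-m) = c * t ^ n := by
    rw [zpow_neg, hsm, mul_inv, inv_inv, inv_inv]
  have key1 : ∀ a b : ℤ, a = -m → b = n → Ufun N q (s ^ a * x) = Ufun N q (t ^ b * x) := by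
    intro a b ha hb; subst ha; subst hb
    rw [hsminv, mul_assoc, Uc _ (mul_ne_zero htn hx)]
  have key2 : ∀ a b : ℤ, a = m → b = -n → Ufun N q (s ^ a * x) = Ufun N q (t ^ b * x) := by
    intro a b ha hb; subst ha; subst hb
    rw [hsm, mul_assoc, ← zpow_neg,
      Uci _ (mul_ne_zero (zpow_ne_zero _ ht) hx)]
  have prefpos := Real.rpow_pos_of_pos hq0 ((2 : ℝ) / N - 2)
  have hUs : ∀ k : ℤ, |k| ≤ |m| → Ufun N q (s ^ k * x) ≠ 0 := by
    intro k hk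
    obtain ⟨h1, h2, h3, h4⟩ := hregs k hk
    rw [Ufun]
    exact div_ne_zero (mul_ne_zero (Complex.ofReal_ne_zero.mpr (ne_of_gt prefpos))
      (mul_ne_zero h1 h2)) (mul_ne_zero h3 h4)
  have hUt : ∀ k : ℤ, |k| ≤ |n| → Ufun N q (t ^ k * x) ≠ 0 := by
    intro k hk
    obtain ⟨h1, h2, h3, h4⟩ := hregt k hk
    rw [Ufun]
    exact div_ne_zero (mul_ne_zero (Complex.ofReal_ne_zero.mpr (ne_of_gt prefpos))
      (mul_ne_zero h1 h2)) (mul_ne_zero h3 h4)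
  set M := m.natAbs with hMdef
  set L := n.natAbs with hLdef
  have hM1 : 1 ≤ M := Int.natAbs_pos.mpr hm
  have hL1 : 1 ≤ L := Int.natAbs_pos.mpr hn
  have habsm : |m| = (M : ℤ) := Int.abs_eq_natAbs m
  have habsn : |n| = (L : ℤ) := Int.abs_eq_natAbs n
  have hUsk : ∀ k : ℕ, k ≤ M → Ufun N q (s ^ (k : ℤ) * x) ≠ 0 := fun k hk =>
    hUs _ (by rw [habsm, abs_of_nonneg (Int.ofNat_nonneg k)]; exact_mod_cast hk)
  have hUskn : ∀ k : ℕ, k ≤ M → Ufun N q (s ^ (-(k : ℤ)) * x) ≠ 0 := fun k hk =>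
    hUs _ (by rw [habsm, abs_neg, abs_of_nonneg (Int.ofNat_nonneg k)]; exact_mod_cast hk)
  have hUtk : ∀ k : ℕ, k ≤ L → Ufun N q (t ^ (k : ℤ) * x) ≠ 0 := fun k hk =>
    hUt _ (by rw [habsn, abs_of_nonneg (Int.ofNat_nonneg k)]; exact_mod_cast hk)
  have hUtkn : ∀ k : ℕ, k ≤ L → Ufun N q (t ^ (-(k : ℤ)) * x) ≠ 0 := fun k hk =>
    hUt _ (by rw [habsn, abs_neg, abs_of_nonneg (Int.ofNat_nonneg k)]; exact_mod_cast hk)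
  have hUx : Ufun N q x ≠ 0 := by
    have := hUsk 0 (by omega); simpa using this
  have hFs : Ffun N q s x m * Ffun N q s x (-m)
      = Ufun N q x * ((∏ k ∈ Finset.Icc 1 (M - 1), Ufun N q (s ^ (k : ℤ) * x)) *
          (∏ k ∈ Finset.Icc 1 M, Ufun N q (s ^ (-(k : ℤ)) * x))⁻¹) := by
    rw [Fpair N q s x m hm, prodA N q s x M hM1, prodB N q s x M,
      show s ^ (0 : ℤ) * x = x by simp]
    ring
  have hFt : Ffun N q t x n * Ffun N q t x (-n)
      = Ufun N q x * ((∏ k ∈ Finset.Icc 1 (L - 1), Ufun N q (t ^ (k : ℤ) * x)) *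
          (∏ k ∈ Finset.Icc 1 L, Ufun N q (t ^ (-(k : ℤ)) * x))⁻¹) := by
    rw [Fpair N q t x n hn, prodA N q t x L hL1, prodB N q t x L,
      show t ^ (0 : ℤ) * x = x by simp]
    ring
  -- splits of the length-M/L products
  have hBs_split : (∏ k ∈ Finset.Icc 1 M, Ufun N q (s ^ (-(k : ℤ)) * x))
      = (∏ k ∈ Finset.Icc 1 (M - 1), Ufun N q (s ^ (-(k : ℤ)) * x))
          * Ufun N q (s ^ (-(M : ℤ)) * x) := by
    rw [show Finset.Icc 1 M = Finset.Icc 1 ((M - 1) + 1) by congr 1; omega,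
      Finset.prod_Icc_succ_top (by omega), show M - 1 + 1 = M by omega]
  have hAs_split : (∏ k ∈ Finset.Icc 1 M, Ufun N q (s ^ (k : ℤ) * x))
      = (∏ k ∈ Finset.Icc 1 (M - 1), Ufun N q (s ^ (k : ℤ) * x))
          * Ufun N q (s ^ (M : ℤ) * x) := by
    rw [show Finset.Icc 1 M = Finset.Icc 1 ((M - 1) + 1) by congr 1; omega,
      Finset.prod_Icc_succ_top (by omega), show M - 1 + 1 = M by omega]
  have hBt_split : (∏ k ∈ Finset.Icc 1 L, Ufun N q (t ^ (-(k : ℤ)) * x))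
      = (∏ k ∈ Finset.Icc 1 (L - 1), Ufun N q (t ^ (-(k : ℤ)) * x))
          * Ufun N q (t ^ (-(L : ℤ)) * x) := by
    rw [show Finset.Icc 1 L = Finset.Icc 1 ((L - 1) + 1) by congr 1; omega,
      Finset.prod_Icc_succ_top (by omega), show L - 1 + 1 = L by omega]
  have hAt_split : (∏ k ∈ Finset.Icc 1 L, Ufun N q (t ^ (k : ℤ) * x))
      = (∏ k ∈ Finset.Icc 1 (L - 1), Ufun N q (t ^ (k : ℤ) * x))
          * Ufun N q (t ^ (L : ℤ) * x) := by
    rw [show Finset.Icc 1 L = Finset.Icc 1 ((L - 1) + 1) by congr 1; omega,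
      Finset.prod_Icc_succ_top (by omega), show L - 1 + 1 = L by omega]
  -- nonvanishing of the partial products
  have hAsne : (∏ k ∈ Finset.Icc 1 (M - 1), Ufun N q (s ^ (k : ℤ) * x)) ≠ 0 :=
    Finset.prod_ne_zero_iff.mpr fun k hk =>
      hUsk k (by simp only [Finset.mem_Icc] at hk; omega)
  have hBsne : (∏ k ∈ Finset.Icc 1 (M - 1), Ufun N q (s ^ (-(k : ℤ)) * x)) ≠ 0 :=
    Finset.prod_ne_zero_iff.mpr fun k hk =>
      hUskn k (by simp only [Finset.mem_Icc] at hk; omega)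
  have hAtne : (∏ k ∈ Finset.Icc 1 (L - 1), Ufun N q (t ^ (k : ℤ) * x)) ≠ 0 :=
    Finset.prod_ne_zero_iff.mpr fun k hk =>
      hUtk k (by simp only [Finset.mem_Icc] at hk; omega)
  have hBtne : (∏ k ∈ Finset.Icc 1 (L - 1), Ufun N q (t ^ (-(k : ℤ)) * x)) ≠ 0 :=
    Finset.prod_ne_zero_iff.mpr fun k hk =>
      hUtkn k (by simp only [Finset.mem_Icc] at hk; omega)
  have hEsM : Ufun N q (s ^ (M : ℤ) * x) ≠ 0 := hUsk M le_rfl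
  have hEsMn : Ufun N q (s ^ (-(M : ℤ)) * x) ≠ 0 := hUskn M le_rfl
  have hEtL : Ufun N q (t ^ (L : ℤ) * x) ≠ 0 := hUtk L le_rfl
  have hEtLn : Ufun N q (t ^ (-(L : ℤ)) * x) ≠ 0 := hUtkn L le_rfl
  have hBsfne : (∏ k ∈ Finset.Icc 1 M, Ufun N q (s ^ (-(k : ℤ)) * x)) ≠ 0 :=
    Finset.prod_ne_zero_iff.mpr fun k hk =>
      hUskn k (by simp only [Finset.mem_Icc] at hk; omega)
  have hBtfne : (∏ k ∈ Finset.Icc 1 L, Ufun N q (t ^ (-(k : ℤ)) * x)) ≠ 0 :=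
    Finset.prod_ne_zero_iff.mpr fun k hk =>
      hUtkn k (by simp only [Finset.mem_Icc] at hk; omega)
  refine ⟨fun hmn => ?_, fun hmn => ⟨?_, ?_⟩⟩
  · -- mn < 0
    have hE : Ufun N q (s ^ (-(M : ℤ)) * x) = Ufun N q (t ^ (-(L : ℤ)) * x) := by
      rcases lt_trichotomy m 0 with hm' | hm' | hm'
      · rcases lt_trichotomy n 0 with hn' | hn' | hn'
        · exact absurd hmn (by nlinarith)
        · exact absurd hn' hn
        · exact key2 _ _ (by omega) (by omega)
      · exact absurd hm' hm
      · rcases lt_trichotomy n 0 with hn' | hn' | hn'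
        · exact key1 _ _ (by omega) (by omega)
        · exact absurd hn' hn
        · exact absurd hmn (by nlinarith)
    rw [Yfun, hFs, hFt, Finset.prod_div_distrib, Finset.prod_div_distrib,
      hBs_split, hBt_split, hE]
    exact Ycalc1 hUx hAsne hBsne hAtne hBtne hEtLn
  · -- mn > 0, first form
    have hE : Ufun N q (s ^ (M : ℤ) * x) = Ufun N q (t ^ (-(L : ℤ)) * x) := by
      rcases lt_trichotomy m 0 with hm' | hm' | hm'
      · rcases lt_trichotomy n 0 with hn' | hn' | hn'
        · exact key1 _ _ (by omega) (by omega)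
        · exact absurd hn' hn
        · exact absurd hmn (by nlinarith)
      · exact absurd hm' hm
      · rcases lt_trichotomy n 0 with hn' | hn' | hn'
        · exact absurd hmn (by nlinarith)
        · exact absurd hn' hn
        · exact key2 _ _ (by omega) (by omega)
    rw [Yfun, hFs, hFt, Finset.prod_div_distrib, Finset.prod_div_distrib,
      hAs_split, hBt_split, hE]
    exact Ycalc2 hUx hAsne hBsfne hAtne hBtne hEtLn
  · -- mn > 0, second form
    have hE : Ufun N q (s ^ (-(M : ℤ)) * x) = Ufun N q (t ^ (L : ℤ) * x) := by
      rcases lt_trichotomy m 0 with hm' | hm' | hm'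
      · rcases lt_trichotomy n 0 with hn' | hn' | hn'
        · exact key2 _ _ (by omega) (by omega)
        · exact absurd hn' hn
        · exact absurd hmn (by nlinarith)
      · exact absurd hm' hm
      · rcases lt_trichotomy n 0 with hn' | hn' | hn'
        · exact absurd hmn (by nlinarith)
        · exact absurd hn' hn
        · exact key1 _ _ (by omega) (by omega)
    rw [Yfun, hFs, hFt, Finset.prod_div_distrib, Finset.prod_div_distrib,
      hBs_split, hAt_split, hE]
    exact Ycalc3 hUx hAsne hBsne hAtne hBtfne hEtL
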